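/- Suppose the 0-1 matrix w (with r rows and m columns) satisfies the SSSI constraint, i.e., every column of w contains at most one nonzero entry. Then the block matrix M(w) = [[N, 0], [0, −w], [N_U, −I_m]] is totally unimodular. -/

import Mathlib

/-- A matrix is totally unimodular if every square submatrix has determinant `0`, `1`, or `-1`. -/
def IsTU {α β : Type*} (A : Matrix α β ℤ) : Prop :=
  ∀ (k : ℕ) (f : Fin k → α) (g : Fin k → β),
    Function.Injective f → Function.Injective g →
      (A.submatrix f g).det = 0 ∨ (A.submatrix f g).det = 1 ∨ (A.submatrix f g).det = -1

/-- The incidence matrix `N` of the bipartite graph `B(A,B)`: rows indexed by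
`Fin n ⊕ (V ⊕ Fin m)` (left vertices `X_L` and right vertices `X_R ∪ U`), columns by edges. -/
def Nmat {n m : ℕ} {V E : Type*} [DecidableEq V] (ℓ : E → Fin n) (ρ : E → V ⊕ Fin m) :
    Matrix (Fin n ⊕ (V ⊕ Fin m)) E ℤ := fun v e =>
  match v with
  | Sum.inl i => if ℓ e = i then 1 else 0
  | Sum.inr u => if ρ e = u then 1 else 0

/-- The matrix `N_U` selecting the input-vertex rows of the incidence matrix. -/
def NUmat {m : ℕ} {V E : Type*} [DecidableEq V] (ρ : E → V ⊕ Fin m) :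
    Matrix (Fin m) E ℤ := fun j e => if ρ e = Sum.inr j then 1 else 0

/-- The block matrix `M(w) = [[N, 0], [0, -w], [N_U, -I_m]]`. -/
def Mmat {n m r : ℕ} {V E : Type*} [DecidableEq V] (ℓ : E → Fin n) (ρ : E → V ⊕ Fin m)
    (w : Matrix (Fin r) (Fin m) ℤ) :
    Matrix (((Fin n ⊕ (V ⊕ Fin m)) ⊕ Fin r) ⊕ Fin m) (E ⊕ Fin m) ℤ :=
  Matrix.fromBlocks (Matrix.fromRows (Nmat ℓ ρ) 0) (Matrix.fromRows 0 (-w))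
    (NUmat ρ) (-(1 : Matrix (Fin m) (Fin m) ℤ))
section Helpers

private lemma sum_two_aux {k : ℕ} (t : Fin k → ℤ) (p1 p2 : Fin k) (hne : p1 ≠ p2)
    (h0 : ∀ p, p ≠ p1 → p ≠ p2 → t p = 0) : ∑ p, t p = t p1 + t p2 := by
  rw [← Finset.sum_pair hne]
  refine (Finset.sum_subset (Finset.subset_univ _) ?_).symm
  intro x _ hx
  simp only [Finset.mem_insert, Finset.mem_singleton, not_or] at hx
  exact h0 x hx.1 hx.2

private lemma triple_mul3 {s a b : ℤ} (hs : s = 1 ∨ s = -1)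
    (ha : a = 0 ∨ a = 1 ∨ a = -1) (hb : b = 0 ∨ b = 1 ∨ b = -1) :
    s * a * b = 0 ∨ s * a * b = 1 ∨ s * a * b = -1 := by
  rcases hs with h | h <;> rcases ha with h' | h' | h' <;> rcases hb with h'' | h'' | h'' <;>
    rw [h, h', h''] <;> norm_num

end Helpers

section Entries

variable {n m r : ℕ} {V E : Type*} [DecidableEq V] (ℓ : E → Fin n) (ρ : E → V ⊕ Fin m)
  (w : Matrix (Fin r) (Fin m) ℤ)

private lemma ME1 (i : Fin n) (e : E) :
    Mmat ℓ ρ w (.inl (.inl (.inl i))) (.inl e) = if ℓ e = i then 1 else 0 := rfl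

private lemma ME2 (u : V ⊕ Fin m) (e : E) :
    Mmat ℓ ρ w (.inl (.inl (.inr u))) (.inl e) = if ρ e = u then 1 else 0 := rfl

private lemma ME3 (i : Fin r) (e : E) : Mmat ℓ ρ w (.inl (.inr i)) (.inl e) = 0 := rfl

private lemma ME4 (j : Fin m) (e : E) :
    Mmat ℓ ρ w (.inr j) (.inl e) = if ρ e = Sum.inr j then 1 else 0 := rfl

private lemma ME5 (x : Fin n ⊕ (V ⊕ Fin m)) (j : Fin m) :
    Mmat ℓ ρ w (.inl (.inl x)) (.inr j) = 0 := rfl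

private lemma ME6 (i : Fin r) (j : Fin m) :
    Mmat ℓ ρ w (.inl (.inr i)) (.inr j) = -(w i j) := rfl

private lemma ME7 (j' j : Fin m) :
    Mmat ℓ ρ w (.inr j') (.inr j) = if j' = j then -1 else 0 := by
  show -(1 : Matrix (Fin m) (Fin m) ℤ) j' j = _
  by_cases h : j' = j <;> simp [Matrix.one_apply, h]

end Entries

theorem Mmat_isTU_of_SSSI {n m r : ℕ} {V E : Type*} [Fintype V] [Fintype E] [DecidableEq V]
    (ℓ : E → Fin n) (ρ : E → V ⊕ Fin m)
    (hinj : Function.Injective fun e : E => (ℓ e, ρ e))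
    (w : Matrix (Fin r) (Fin m) ℤ)
    (h01 : ∀ i j, w i j = 0 ∨ w i j = 1)
    (hSSSI : ∀ j : Fin m, ∀ i i' : Fin r, w i j ≠ 0 → w i' j ≠ 0 → i = i') :
    IsTU (Mmat ℓ ρ w) := by
  have hentry : ∀ p q, Mmat ℓ ρ w p q = 0 ∨ Mmat ℓ ρ w p q = 1 ∨ Mmat ℓ ρ w p q = -1 := by
    rintro (((i | u) | i) | j') (e | j)
    · rw [ME1]; split <;> simp
    · rw [ME5]; simp
    · rw [ME2]; split <;> simp
    · rw [ME5]; simp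
    · rw [ME3]; simp
    · rw [ME6]; rcases h01 i j with h | h <;> rw [h] <;> simp
    · rw [ME4]; split <;> simp
    · rw [ME7]; split <;> simp
  intro k
  induction k using Nat.strong_induction_on with
  | _ k IH =>
  intro f g hf hg
  rcases k with _ | k
  · right; left; exact Matrix.det_fin_zero
  set S := (Mmat ℓ ρ w).submatrix f g with hS
  by_cases hC1 : ∃ q p, ∀ p', p' ≠ p → S p' q = 0
  · -- a column with at most one nonzero entry: Laplace expansion
    obtain ⟨q, p, hpq⟩ := hC1
    rw [Matrix.det_succ_column S q, Finset.sum_eq_single p]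
    · refine triple_mul3 (neg_one_pow_eq_or ℤ _) (hentry (f p) (g q)) ?_
      have hsub : S.submatrix p.succAbove q.succAbove
          = (Mmat ℓ ρ w).submatrix (f ∘ p.succAbove) (g ∘ q.succAbove) := by
        rw [hS, Matrix.submatrix_submatrix]
      rw [hsub]
      exact IH k (Nat.lt_succ_self k) _ _ (hf.comp Fin.succAbove_right_injective)
        (hg.comp Fin.succAbove_right_injective)
    · intro b _ hb
      rw [hpq b hb, mul_zero, zero_mul]
    · intro h; exact absurd (Finset.mem_univ p) h
  · push_neg at hC1
    by_cases hC2 : ∃ j pR pB, f pR = Sum.inl (Sum.inl (Sum.inr (Sum.inr j))) ∧ f pB = Sum.inr j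
    · -- both the U-row copy in N and the corresponding N_U row are selected
      obtain ⟨j, pR, pB, hR, hB⟩ := hC2
      have hne : pR ≠ pB := by
        intro h
        rw [h, hB] at hR
        cases hR
      by_cases hq : ∃ q, g q = Sum.inr j
      · obtain ⟨q, hq⟩ := hq
        have hdet : S.det = (S.updateRow pB (S pB + (-1 : ℤ) • S pR)).det :=
          (Matrix.det_updateRow_add_smul_self S hne.symm (-1)).symm
        set T := S.updateRow pB (S pB + (-1 : ℤ) • S pR) with hT
        have hTrow : ∀ q', T pB q' = S pB q' - S pR q' := by
          intro q'
          rw [hT, Matrix.updateRow_self]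
          simp [sub_eq_add_neg]
        have hMM : ∀ q', S pB q' - S pR q'
            = Mmat ℓ ρ w (f pB) (g q') - Mmat ℓ ρ w (f pR) (g q') := fun _ => rfl
        have hzero : ∀ q', q' ≠ q → T pB q' = 0 := by
          intro q' hq'
          rw [hTrow, hMM, hB, hR]
          rcases hgq' : g q' with e | j''
          · rw [ME4, ME2]; ring
          · have hj : j ≠ j'' := by
              intro h
              exact hq' (hg (by rw [hgq', ← h, hq]))
            rw [ME7, ME5, if_neg hj]; ring
        have hTq : T pB q = -1 := by
          rw [hTrow, hMM, hB, hR, hq, ME7, ME5, if_pos rfl]; ring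
        rw [hdet, Matrix.det_succ_row T pB, Finset.sum_eq_single q]
        · have hsub : T.submatrix pB.succAbove q.succAbove
              = (Mmat ℓ ρ w).submatrix (f ∘ pB.succAbove) (g ∘ q.succAbove) := by
            ext a b
            rw [Matrix.submatrix_apply, hT, Matrix.updateRow_ne (Fin.succAbove_ne pB a)]
            rfl
          rw [hsub, hTq]
          exact triple_mul3 (neg_one_pow_eq_or ℤ _) (Or.inr (Or.inr rfl))
            (IH k (Nat.lt_succ_self k) _ _ (hf.comp Fin.succAbove_right_injective)
              (hg.comp Fin.succAbove_right_injective))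
        · intro b _ hb
          rw [hzero b hb, mul_zero, zero_mul]
        · intro h
          exact absurd (Finset.mem_univ q) h
      · push_neg at hq
        left
        have hrows : S pR = S pB := by
          funext q'
          show Mmat ℓ ρ w (f pR) (g q') = Mmat ℓ ρ w (f pB) (g q')
          rw [hR, hB]
          rcases hgq' : g q' with e | j''
          · rw [ME2, ME4]
          · have hj : j ≠ j'' := by
              intro h
              exact hq q' (by rw [hgq', h])
            rw [ME5, ME7, if_neg hj]
        exact Matrix.det_zero_of_row_eq hne hrows
    · -- every column has two nonzeros and the two copies of a U-row are never both selected: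
      -- exhibit an explicit linear dependence among the rows
      push_neg at hC2
      left
      rw [← Matrix.exists_vecMul_eq_zero_iff]
      set c : Fin (k + 1) → ℤ := fun p =>
        Sum.elim (Sum.elim (Sum.elim (fun _ => (1 : ℤ)) (fun _ => -1)) (fun _ => 1))
          (fun _ => -1) (f p) with hc
      have hc1 : ∀ p (i : Fin n), f p = Sum.inl (Sum.inl (Sum.inl i)) → c p = 1 := by
        intro p i h; simp only [hc]; rw [h]; rfl
      have hc2 : ∀ p (u : V ⊕ Fin m), f p = Sum.inl (Sum.inl (Sum.inr u)) → c p = -1 := by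
        intro p u h; simp only [hc]; rw [h]; rfl
      have hc3 : ∀ p (i : Fin r), f p = Sum.inl (Sum.inr i) → c p = 1 := by
        intro p i h; simp only [hc]; rw [h]; rfl
      have hc4 : ∀ p (j : Fin m), f p = Sum.inr j → c p = -1 := by
        intro p j h; simp only [hc]; rw [h]; rfl
      refine ⟨c, ?_, ?_⟩
      · intro h0
        have h1 := congrFun h0 0
        simp only [Pi.zero_apply, hc] at h1
        rcases hfp : f 0 with ((i | u) | i) | j <;> rw [hfp] at h1 <;> simp at h1
      · funext q
        show (∑ p, c p * S p q) = 0
        obtain ⟨p1, -, h1⟩ := hC1 q 0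
        obtain ⟨p2, hp21, h2⟩ := hC1 q p1
        have hSM : ∀ p, S p q = Mmat ℓ ρ w (f p) (g q) := fun _ => rfl
        rcases hgq : g q with e | j
        · rcases hρ : ρ e with v | j
          · -- edge into an internal right vertex
            have hsupp : ∀ p, S p q ≠ 0 → f p = Sum.inl (Sum.inl (Sum.inl (ℓ e)))
                ∨ f p = Sum.inl (Sum.inl (Sum.inr (ρ e))) := by
              intro p hp
              rw [hSM, hgq] at hp
              rcases hfp : f p with ((i | u) | i) | j' <;> rw [hfp] at hp
              · rw [ME1] at hp
                rcases eq_or_ne (ℓ e) i with h | h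
                · left; rw [h]
                · rw [if_neg h] at hp; exact absurd rfl hp
              · rw [ME2] at hp
                rcases eq_or_ne (ρ e) u with h | h
                · right; rw [h]
                · rw [if_neg h] at hp; exact absurd rfl hp
              · rw [ME3] at hp; exact absurd rfl hp
              · rw [ME4] at hp
                rw [hρ] at hp
                simp at hp
            have key : ∀ pL pRv, f pL = Sum.inl (Sum.inl (Sum.inl (ℓ e)))
                → f pRv = Sum.inl (Sum.inl (Sum.inr (ρ e))) → pL ≠ pRv
                → (∑ p, c p * S p q) = 0 := by
              intro pL pRv eL eR hne'
              rw [sum_two_aux _ pL pRv hne' ?_]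
              · have v1 : S pL q = 1 := by rw [hSM, hgq, eL, ME1, if_pos rfl]
                have v2 : S pRv q = 1 := by rw [hSM, hgq, eR, ME2, if_pos rfl]
                rw [v1, v2, hc1 pL _ eL, hc2 pRv _ eR]; ring
              · intro p hpne1 hpne2
                rcases eq_or_ne (S p q) 0 with h | h
                · rw [h, mul_zero]
                · rcases hsupp p h with hh | hh
                  · exact absurd (hf (hh.trans eL.symm)) hpne1
                  · exact absurd (hf (hh.trans eR.symm)) hpne2
            rcases hsupp p1 h1 with e1 | e1 <;> rcases hsupp p2 h2 with e2 | e2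
            · exact absurd (hf (e1.trans e2.symm)) (Ne.symm hp21)
            · exact key p1 p2 e1 e2 (Ne.symm hp21)
            · exact key p2 p1 e2 e1 hp21
            · exact absurd (hf (e1.trans e2.symm)) (Ne.symm hp21)
          · -- edge into an input vertex
            have hsupp : ∀ p, S p q ≠ 0 → f p = Sum.inl (Sum.inl (Sum.inl (ℓ e)))
                ∨ f p = Sum.inl (Sum.inl (Sum.inr (Sum.inr j))) ∨ f p = Sum.inr j := by
              intro p hp
              rw [hSM, hgq] at hp
              rcases hfp : f p with ((i | u) | i) | j' <;> rw [hfp] at hp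
              · rw [ME1] at hp
                rcases eq_or_ne (ℓ e) i with h | h
                · left; rw [h]
                · rw [if_neg h] at hp; exact absurd rfl hp
              · rw [ME2] at hp
                rcases eq_or_ne (ρ e) u with h | h
                · right; left; rw [← h, hρ]
                · rw [if_neg h] at hp; exact absurd rfl hp
              · rw [ME3] at hp; exact absurd rfl hp
              · rw [ME4] at hp
                rcases eq_or_ne (ρ e) (Sum.inr j') with h | h
                · right; right
                  have : j' = j := Sum.inr_injective (h.symm.trans hρ)
                  rw [this]
                · rw [if_neg h] at hp; exact absurd rfl hp
            have keyR : ∀ pL pRv, f pL = Sum.inl (Sum.inl (Sum.inl (ℓ e)))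
                → f pRv = Sum.inl (Sum.inl (Sum.inr (Sum.inr j))) → pL ≠ pRv
                → (∑ p, c p * S p q) = 0 := by
              intro pL pRv eL eR hne'
              rw [sum_two_aux _ pL pRv hne' ?_]
              · have v1 : S pL q = 1 := by rw [hSM, hgq, eL, ME1, if_pos rfl]
                have v2 : S pRv q = 1 := by rw [hSM, hgq, eR, ME2, hρ, if_pos rfl]
                rw [v1, v2, hc1 pL _ eL, hc2 pRv _ eR]; ring
              · intro p hpne1 hpne2
                rcases eq_or_ne (S p q) 0 with h | h
                · rw [h, mul_zero]
                · rcases hsupp p h with hh | hh | hh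
                  · exact absurd (hf (hh.trans eL.symm)) hpne1
                  · exact absurd (hf (hh.trans eR.symm)) hpne2
                  · exact absurd (hC2 j pRv p eR) (not_not_intro hh)
            have keyB : ∀ pL pBv, f pL = Sum.inl (Sum.inl (Sum.inl (ℓ e)))
                → f pBv = Sum.inr j → pL ≠ pBv
                → (∑ p, c p * S p q) = 0 := by
              intro pL pBv eL eB hne'
              rw [sum_two_aux _ pL pBv hne' ?_]
              · have v1 : S pL q = 1 := by rw [hSM, hgq, eL, ME1, if_pos rfl]
                have v2 : S pBv q = 1 := by rw [hSM, hgq, eB, ME4, hρ, if_pos rfl]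
                rw [v1, v2, hc1 pL _ eL, hc4 pBv _ eB]; ring
              · intro p hpne1 hpne2
                rcases eq_or_ne (S p q) 0 with h | h
                · rw [h, mul_zero]
                · rcases hsupp p h with hh | hh | hh
                  · exact absurd (hf (hh.trans eL.symm)) hpne1
                  · exact absurd (hC2 j p pBv hh) (not_not_intro eB)
                  · exact absurd (hf (hh.trans eB.symm)) hpne2
            rcases hsupp p1 h1 with e1 | e1 | e1 <;> rcases hsupp p2 h2 with e2 | e2 | e2
            · exact absurd (hf (e1.trans e2.symm)) (Ne.symm hp21)
            · exact keyR p1 p2 e1 e2 (Ne.symm hp21)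
            · exact keyB p1 p2 e1 e2 (Ne.symm hp21)
            · exact keyR p2 p1 e2 e1 hp21
            · exact absurd (hf (e1.trans e2.symm)) (Ne.symm hp21)
            · exact absurd (hC2 j p1 p2 e1) (not_not_intro e2)
            · exact keyB p2 p1 e2 e1 hp21
            · exact absurd (hC2 j p2 p1 e2) (not_not_intro e1)
            · exact absurd (hf (e1.trans e2.symm)) (Ne.symm hp21)
        · -- a column of the right-hand block
          have hsupp : ∀ p, S p q ≠ 0 →
              (∃ i, f p = Sum.inl (Sum.inr i) ∧ w i j ≠ 0) ∨ f p = Sum.inr j := by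
            intro p hp
            rw [hSM, hgq] at hp
            rcases hfp : f p with ((i | u) | i) | j' <;> rw [hfp] at hp
            · rw [ME5] at hp; exact absurd rfl hp
            · rw [ME5] at hp; exact absurd rfl hp
            · rw [ME6] at hp
              exact Or.inl ⟨i, rfl, fun h => hp (by rw [h]; ring)⟩
            · rw [ME7] at hp
              rcases eq_or_ne j' j with h | h
              · right; rw [h]
              · rw [if_neg h] at hp; exact absurd rfl hp
          have key : ∀ pr pb (i : Fin r), f pr = Sum.inl (Sum.inr i) → w i j ≠ 0
              → f pb = Sum.inr j → pr ≠ pb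
              → (∑ p, c p * S p q) = 0 := by
            intro pr pb i er hwi eb hne'
            rw [sum_two_aux _ pr pb hne' ?_]
            · have hw1 : w i j = 1 := (h01 i j).resolve_left hwi
              have v1 : S pr q = -1 := by rw [hSM, hgq, er, ME6, hw1]
              have v2 : S pb q = -1 := by rw [hSM, hgq, eb, ME7, if_pos rfl]
              rw [v1, v2, hc3 pr _ er, hc4 pb _ eb]; ring
            · intro p hpne1 hpne2
              rcases eq_or_ne (S p q) 0 with h | h
              · rw [h, mul_zero]
              · rcases hsupp p h with ⟨i', hi', hwi'⟩ | hh
                · have : i' = i := hSSSI j i' i hwi' hwi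
                  rw [this] at hi'
                  exact absurd (hf (hi'.trans er.symm)) hpne1
                · exact absurd (hf (hh.trans eb.symm)) hpne2
          rcases hsupp p1 h1 with ⟨i1, hi1, hw1⟩ | e1 <;>
            rcases hsupp p2 h2 with ⟨i2, hi2, hw2⟩ | e2
          · have : i1 = i2 := hSSSI j i1 i2 hw1 hw2
            rw [this] at hi1
            exact absurd (hf (hi1.trans hi2.symm)) (Ne.symm hp21)
          · exact key p1 p2 i1 hi1 hw1 e2 (Ne.symm hp21)
          · exact key p2 p1 i2 hi2 hw2 e1 hp21
          · exact absurd (hf (e1.trans e2.symm)) (Ne.symm hp21)
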